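/- arXiv:1403.2378 — 2 statements merged into one kernel-verified Lean document; each statement's English description precedes it below -/
import Mathlib

section
/- (Kress–Sloan) Let s > 1/2 and 0 ≤ t ≤ s. There is a constant C_{t,s} such that for every integer n ≥ 1 and every continuous 2π-periodic F : ℝ → ℂ with ‖F‖_{H^s(𝕋)} < ∞ (taking the continuous representative given by its uniformly convergent Fourier series), the trigonometric interpolant satisfies ‖I_nF − F‖_{H^t(𝕋)} ≤ C_{t,s} n^{t−s} ‖F‖_{H^s(𝕋)}. -/
open MeasureTheory Real

/-- Fourier coefficients of a `2π`-periodic function: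
`F̂_k = (1/(2π)) ∫_0^{2π} e^{-ikθ} F(θ) dθ`. -/
noncomputable def fourierCoeffT (F : ℝ → ℂ) (k : ℤ) : ℂ :=
  (1 / (2 * Real.pi) : ℂ) * ∫ θ in (0 : ℝ)..(2 * Real.pi),
    Complex.exp (-Complex.I * (k : ℂ) * (θ : ℂ)) * F θ

/-- The periodic Sobolev norm `‖F‖_{H^s(𝕋)} = (∑_k (1+|k|)^{2s} |F̂_k|²)^{1/2}`. -/
noncomputable def sobNormT (s : ℝ) (F : ℝ → ℂ) : ℝ :=
  (∑' k : ℤ, (1 + |(k : ℝ)|) ^ (2 * s) * ‖fourierCoeffT F k‖ ^ 2) ^ ((1 : ℝ) / 2)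

/-- The trigonometric interpolant `I_n F(θ) = ∑_{k=-n₋}^{n₊} e^{ikθ} F̃_k`,
where `F̃_k = (1/n) ∑_{ℓ=0}^{n-1} e^{-ikθ_ℓ} F(θ_ℓ)`, `θ_ℓ = 2πℓ/n`,
`n₊ = ⌊n/2⌋`, `n₋ = ⌊(n-1)/2⌋`. -/
noncomputable def trigInterp (n : ℕ) (F : ℝ → ℂ) (θ : ℝ) : ℂ :=
  ∑ k ∈ Finset.Icc (-(((n - 1) / 2 : ℕ) : ℤ)) ((n / 2 : ℕ) : ℤ),
    Complex.exp (Complex.I * (k : ℂ) * (θ : ℂ)) *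
      ((n : ℂ)⁻¹ * ∑ ℓ ∈ Finset.range n,
        Complex.exp (-Complex.I * (k : ℂ) * ((2 * Real.pi * ℓ / n : ℝ) : ℂ)) *
          F (2 * Real.pi * ℓ / n))

lemma twopi_pos : (0:ℝ) < 2 * Real.pi := by positivity

/-- the lift of a periodic continuous function to the additive circle -/
noncomputable def liftC {F : ℝ → ℂ} (hF : Continuous F)
    (hp : Function.Periodic F (2 * Real.pi)) : C(AddCircle (2 * Real.pi), ℂ) :=
  ⟨hp.lift, by
    rw [isQuotientMap_quotient_mk'.continuous_iff]
    exact hF.congr fun x => (hp.lift_coe x).symm⟩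

lemma liftC_coe {F : ℝ → ℂ} (hF : Continuous F) (hp : Function.Periodic F (2 * Real.pi))
    (x : ℝ) : liftC hF hp (x : AddCircle (2 * Real.pi)) = F x := hp.lift_coe x

lemma fourier_eq (k : ℤ) (x : ℝ) :
    (fourier k (x : AddCircle (2 * Real.pi)) : ℂ) = Complex.exp (Complex.I * k * x) := by
  rw [fourier_coe_apply]
  congr 1
  have hπ : (Real.pi : ℂ) ≠ 0 := Complex.ofReal_ne_zero.mpr Real.pi_ne_zero
  push_cast
  field_simp

lemma fourierCoeffT_eq {F : ℝ → ℂ} (hF : Continuous F)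
    (hp : Function.Periodic F (2 * Real.pi)) (k : ℤ) :
    haveI : Fact (0 < 2 * Real.pi) := ⟨twopi_pos⟩
    fourierCoeff (liftC hF hp) k = fourierCoeffT F k := by
  haveI : Fact (0 < 2 * Real.pi) := ⟨twopi_pos⟩
  rw [fourierCoeff_eq_intervalIntegral _ k 0]
  rw [fourierCoeffT]
  rw [zero_add]
  have : ∀ x : ℝ, (fourier (-k) (x : AddCircle (2*Real.pi)) : ℂ) • liftC hF hp x
      = Complex.exp (-Complex.I * k * x) * F x := by
    intro x
    rw [smul_eq_mul, liftC_coe, fourier_eq]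
    push_cast
    ring_nf
  rw [intervalIntegral.integral_congr (fun x _ => this x)]
  rw [Complex.real_smul]
  push_cast
  ring

lemma summable_weight {s : ℝ} (hs : 1 / 2 < s) :
    Summable (fun k : ℤ => (1 + |(k : ℝ)|) ^ (-(2 * s))) := by
  have h1 : (1:ℝ) < 2 * s := by linarith
  have hbase : Summable (fun k : ℤ => |(k:ℝ)| ^ (-(2*s)) + (if k = 0 then (1:ℝ) else 0)) :=
    (Real.summable_abs_int_rpow h1).add
      (summable_of_ne_finset_zero (s := {0}) (by intro i hi; simp at hi ⊢; exact hi))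
  refine Summable.of_nonneg_of_le (fun k => Real.rpow_nonneg (by positivity) _) (fun k => ?_) hbase
  rcases eq_or_ne k 0 with rfl | hk
  · norm_num [Real.zero_rpow (show -(2*s) ≠ 0 by intro h; nlinarith), Real.one_rpow]
  · have h0 : (0:ℝ) < |(k:ℝ)| := by
      simp only [abs_pos, Int.cast_ne_zero]; exact hk
    have : (1 + |(k:ℝ)|) ^ (-(2*s)) ≤ |(k:ℝ)| ^ (-(2*s)) :=
      Real.rpow_le_rpow_of_nonpos h0 (by linarith) (by linarith)
    simp only [hk, if_false, add_zero]
    exact this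

lemma sq_rpow_half (x : ℝ) (hx : 0 ≤ x) (r : ℝ) : (x ^ r) ^ 2 = x ^ (2 * r) := by
  rw [← Real.rpow_natCast (x ^ r) 2, ← Real.rpow_mul hx]
  norm_num
  rw [mul_comm]

lemma summable_coeff {s : ℝ} (hs : 1 / 2 < s) {F : ℝ → ℂ}
    (hsum : Summable (fun k : ℤ => (1 + |(k : ℝ)|) ^ (2 * s) * ‖fourierCoeffT F k‖ ^ 2)) :
    Summable (fun k : ℤ => fourierCoeffT F k) := by
  apply Summable.of_norm
  have hb : Summable (fun k : ℤ => ((1 + |(k:ℝ)|) ^ (-(2*s))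
      + (1 + |(k:ℝ)|) ^ (2*s) * ‖fourierCoeffT F k‖ ^ 2) / 2) :=
    ((summable_weight hs).add hsum).div_const 2
  refine Summable.of_nonneg_of_le (fun k => norm_nonneg _) (fun k => ?_) hb
  have h1 : (0:ℝ) < 1 + |(k:ℝ)| := by positivity
  have key : ‖fourierCoeffT F k‖
      = ((1 + |(k:ℝ)|) ^ (-s)) * ((1 + |(k:ℝ)|) ^ s * ‖fourierCoeffT F k‖) := by
    rw [← mul_assoc, ← Real.rpow_add h1]
    simp
  have amgm : ∀ a b : ℝ, a * b ≤ (a ^ 2 + b ^ 2) / 2 := by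
    intro a b; nlinarith [sq_nonneg (a - b)]
  calc ‖fourierCoeffT F k‖
      = ((1 + |(k:ℝ)|) ^ (-s)) * ((1 + |(k:ℝ)|) ^ s * ‖fourierCoeffT F k‖) := key
    _
      ≤ (((1 + |(k:ℝ)|) ^ (-s)) ^ 2 + ((1 + |(k:ℝ)|) ^ s * ‖fourierCoeffT F k‖) ^ 2) / 2 :=
        amgm _ _
    _ = ((1 + |(k:ℝ)|) ^ (-(2*s)) + (1 + |(k:ℝ)|) ^ (2*s) * ‖fourierCoeffT F k‖ ^ 2) / 2 := by
        rw [mul_pow, sq_rpow_half _ h1.le, sq_rpow_half _ h1.le]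
        ring_nf

lemma hasSum_pointwise {s : ℝ} (hs : 1 / 2 < s) {F : ℝ → ℂ} (hF : Continuous F)
    (hp : Function.Periodic F (2 * Real.pi))
    (hsum : Summable (fun k : ℤ => (1 + |(k : ℝ)|) ^ (2 * s) * ‖fourierCoeffT F k‖ ^ 2))
    (θ : ℝ) :
    HasSum (fun k : ℤ => fourierCoeffT F k * Complex.exp (Complex.I * k * θ)) (F θ) := by
  haveI : Fact (0 < 2 * Real.pi) := ⟨twopi_pos⟩
  have hc : Summable (fourierCoeff (liftC hF hp)) := by
    have := summable_coeff hs hsum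
    refine this.congr fun k => ?_
    rw [fourierCoeffT_eq hF hp]
  have := has_pointwise_sum_fourier_series_of_summable hc (θ : AddCircle (2 * Real.pi))
  rw [liftC_coe hF hp] at this
  refine this.congr_fun fun k => ?_
  rw [smul_eq_mul, fourier_eq, fourierCoeffT_eq hF hp]

lemma expsum (n : ℕ) (hn : 1 ≤ n) (d : ℤ) :
    ∑ ℓ ∈ Finset.range n, Complex.exp (Complex.I * d * ((2 * Real.pi * ℓ / n : ℝ) : ℂ)) =
      if (n : ℤ) ∣ d then (n : ℂ) else 0 := by
  have hn0 : (n : ℂ) ≠ 0 := Nat.cast_ne_zero.mpr (by omega)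
  set z : ℂ := Complex.exp (Complex.I * d * (2 * Real.pi / n)) with hz
  have hterm : ∀ ℓ ∈ Finset.range n,
      Complex.exp (Complex.I * d * ((2 * Real.pi * ℓ / n : ℝ) : ℂ)) = z ^ ℓ := by
    intro ℓ _
    rw [hz, ← Complex.exp_nat_mul]
    congr 1
    push_cast
    field_simp
  rw [Finset.sum_congr rfl hterm]
  by_cases hdvd : (n : ℤ) ∣ d
  · obtain ⟨m, rfl⟩ := hdvd
    have hz1 : z = 1 := by
      rw [hz]
      have : Complex.I * ((n : ℤ) * m : ℤ) * (2 * Real.pi / n) = m * (2 * Real.pi * Complex.I) := by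
        push_cast
        field_simp
      rw [this, Complex.exp_int_mul_two_pi_mul_I]
    simp only [hz1, one_pow, Finset.sum_const, Finset.card_range, nsmul_eq_mul, mul_one,
      if_pos (Dvd.intro m rfl)]
  · have hz1 : z ≠ 1 := by
      intro h
      rw [hz, Complex.exp_eq_one_iff] at h
      obtain ⟨m, hm⟩ := h
      apply hdvd
      refine ⟨m, ?_⟩
      have hπ : (Real.pi : ℂ) ≠ 0 := Complex.ofReal_ne_zero.mpr Real.pi_ne_zero
      have hI : Complex.I ≠ 0 := Complex.I_ne_zero
      have : (d : ℂ) = (n : ℂ) * m := by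
        field_simp at hm
        apply mul_left_cancel₀ (show Complex.I * (2 * (Real.pi:ℂ)) ≠ 0 from
          mul_ne_zero Complex.I_ne_zero (by
            simpa using (mul_ne_zero (two_ne_zero (α := ℂ))
              (Complex.ofReal_ne_zero.mpr Real.pi_ne_zero))))
        linear_combination (Complex.I * (2 * (Real.pi:ℂ))) * hm
      exact_mod_cast this
    rw [geom_sum_eq hz1]
    have hzn : z ^ n = 1 := by
      rw [hz, ← Complex.exp_nat_mul]
      have : (n : ℂ) * (Complex.I * d * (2 * Real.pi / n)) = d * (2 * Real.pi * Complex.I) := by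
        field_simp
      rw [this, Complex.exp_int_mul_two_pi_mul_I]
    rw [hzn]
    simp only [sub_self, zero_div, if_neg hdvd]

noncomputable def dcoef (n : ℕ) (F : ℝ → ℂ) (k : ℤ) : ℂ :=
  (n : ℂ)⁻¹ * ∑ ℓ ∈ Finset.range n,
    Complex.exp (-Complex.I * (k : ℂ) * ((2 * Real.pi * ℓ / n : ℝ) : ℂ)) *
      F (2 * Real.pi * ℓ / n)

lemma hasSum_alias {s : ℝ} (hs : 1 / 2 < s) {F : ℝ → ℂ} (hF : Continuous F)
    (hp : Function.Periodic F (2 * Real.pi))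
    (hsum : Summable (fun k : ℤ => (1 + |(k : ℝ)|) ^ (2 * s) * ‖fourierCoeffT F k‖ ^ 2))
    (n : ℕ) (hn : 1 ≤ n) (k : ℤ) :
    HasSum (fun m : ℤ => fourierCoeffT F (k + m * n)) (dcoef n F k) := by
  have hn0 : (n : ℂ) ≠ 0 := Nat.cast_ne_zero.mpr (by omega)
  -- step 1-3: sum over nodes
  have h3 : HasSum
      (fun j : ℤ => ∑ ℓ ∈ Finset.range n,
        Complex.exp (-Complex.I * (k : ℂ) * ((2 * Real.pi * ℓ / n : ℝ) : ℂ)) *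
          (fourierCoeffT F j * Complex.exp (Complex.I * j * ((2 * Real.pi * ℓ / n : ℝ) : ℂ))))
      (∑ ℓ ∈ Finset.range n,
        Complex.exp (-Complex.I * (k : ℂ) * ((2 * Real.pi * ℓ / n : ℝ) : ℂ)) *
          F (2 * Real.pi * ℓ / n)) := by
    refine hasSum_sum fun ℓ _ => ?_
    have := (hasSum_pointwise hs hF hp hsum (2 * Real.pi * ℓ / n)).mul_left
      (Complex.exp (-Complex.I * (k : ℂ) * ((2 * Real.pi * ℓ / n : ℝ) : ℂ)))
    convert this using 2 with j
  -- step 4: evaluate inner sums via expsum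
  have h4 : HasSum
      (fun j : ℤ => fourierCoeffT F j * (if (n : ℤ) ∣ (j - k) then (n : ℂ) else 0))
      (∑ ℓ ∈ Finset.range n,
        Complex.exp (-Complex.I * (k : ℂ) * ((2 * Real.pi * ℓ / n : ℝ) : ℂ)) *
          F (2 * Real.pi * ℓ / n)) := by
    refine h3.congr_fun fun j => ?_
    have hterm : ∀ ℓ ∈ Finset.range n,
        Complex.exp (-Complex.I * (k : ℂ) * ((2 * Real.pi * ℓ / n : ℝ) : ℂ)) *
          (fourierCoeffT F j * Complex.exp (Complex.I * j * ((2 * Real.pi * ℓ / n : ℝ) : ℂ)))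
        = fourierCoeffT F j *
            Complex.exp (Complex.I * ((j - k : ℤ) : ℂ) * ((2 * Real.pi * ℓ / n : ℝ) : ℂ)) := by
      intro ℓ _
      rw [mul_left_comm, ← Complex.exp_add]
      congr 2
      push_cast
      ring
    rw [Finset.sum_congr rfl hterm, ← Finset.mul_sum, expsum n hn (j - k)]
  -- step 5: multiply by n⁻¹
  have h5 : HasSum
      (fun j : ℤ => if (n : ℤ) ∣ (j - k) then fourierCoeffT F j else 0) (dcoef n F k) := by
    have := h4.mul_left ((n : ℂ)⁻¹)
    rw [← dcoef] at this
    refine this.congr_fun fun j => ?_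
    by_cases hd : (n : ℤ) ∣ (j - k)
    · simp only [hd, if_true]
      field_simp
    · simp [hd]
  -- step 6: reindex
  have he : Function.Injective (fun m : ℤ => k + m * n) := by
    intro a b hab
    simp only [add_right_inj] at hab
    exact mul_right_cancel₀ (by exact_mod_cast (by omega : (n:ℤ) ≠ 0)) hab
  have h0 : ∀ j ∉ Set.range (fun m : ℤ => k + m * n),
      (if (n : ℤ) ∣ (j - k) then fourierCoeffT F j else 0) = 0 := by
    intro j hj
    rw [if_neg]
    intro ⟨m, hm⟩
    exact hj ⟨m, show k + m * n = j by linear_combination -hm⟩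
  have := (Function.Injective.hasSum_iff he h0).mpr h5
  refine this.congr_fun fun m => ?_
  simp only [Function.comp_apply]
  rw [if_pos ⟨m, by ring⟩]

lemma continuous_trigInterp (n : ℕ) (F : ℝ → ℂ) : Continuous (trigInterp n F) := by
  apply continuous_finset_sum
  intro j _
  exact ((Complex.continuous_exp.comp ((continuous_const).mul
    Complex.continuous_ofReal)).mul continuous_const)

lemma fourierCoeffT_exp_mul (j : ℤ) (c : ℂ) (k : ℤ) :
    fourierCoeffT (fun θ => Complex.exp (Complex.I * j * θ) * c) k
      = if j = k then c else 0 := by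
  have hπ : (Real.pi : ℝ) ≠ 0 := Real.pi_ne_zero
  have key : ∀ θ : ℝ, Complex.exp (-Complex.I * k * θ) *
      (Complex.exp (Complex.I * j * θ) * c)
      = Complex.exp ((Complex.I * ((j : ℂ) - k)) * θ) * c := by
    intro θ
    rw [← mul_assoc, ← Complex.exp_add]
    congr 2
    ring
  rw [fourierCoeffT, intervalIntegral.integral_congr (fun θ _ => key θ),
    intervalIntegral.integral_mul_const]
  by_cases hjk : j = k
  · subst hjk
    simp only [sub_self, mul_zero, zero_mul, Complex.exp_zero, if_true]
    rw [intervalIntegral.integral_congr (g := fun _ => (1:ℂ))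
      (fun θ _ => by norm_num)]
    rw [intervalIntegral.integral_const]
    rw [sub_zero, Complex.real_smul]
    push_cast
    have h2π : (2 * (Real.pi:ℂ)) ≠ 0 := by
      exact mul_ne_zero two_ne_zero (Complex.ofReal_ne_zero.mpr Real.pi_ne_zero)
    field_simp
  · have hc : Complex.I * ((j : ℂ) - k) ≠ 0 := by
      apply mul_ne_zero Complex.I_ne_zero
      rw [sub_ne_zero]
      exact_mod_cast hjk
    rw [if_neg hjk]
    have hint := integral_exp_mul_complex (a := 0) (b := 2 * Real.pi) hc
    rw [hint]
    have h1 : Complex.exp (Complex.I * ((j : ℂ) - k) * (((2 * Real.pi : ℝ)) : ℂ)) = 1 := by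
      have h2 : Complex.I * ((j : ℂ) - k) * (((2 * Real.pi : ℝ)) : ℂ)
          = ((j - k : ℤ) : ℂ) * (2 * Real.pi * Complex.I) := by push_cast; ring
      rw [h2, Complex.exp_int_mul_two_pi_mul_I]
    rw [h1]
    simp

lemma fourierCoeffT_sub {G H : ℝ → ℂ} (hG : Continuous G) (hH : Continuous H) (k : ℤ) :
    fourierCoeffT (fun θ => G θ - H θ) k = fourierCoeffT G k - fourierCoeffT H k := by
  have hint : ∀ {f : ℝ → ℂ}, Continuous f → IntervalIntegrable
      (fun θ : ℝ => Complex.exp (-Complex.I * k * θ) * f θ) volume 0 (2 * Real.pi) := by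
    intro f hf
    exact ((Complex.continuous_exp.comp ((continuous_const).mul
      Complex.continuous_ofReal)).mul hf).intervalIntegrable _ _
  rw [fourierCoeffT, fourierCoeffT, fourierCoeffT]
  rw [intervalIntegral.integral_congr (g := fun θ =>
      Complex.exp (-Complex.I * k * θ) * G θ - Complex.exp (-Complex.I * k * θ) * H θ)
      (fun θ _ => by ring)]
  rw [intervalIntegral.integral_sub (hint hG) (hint hH)]
  ring

lemma fourierCoeffT_finsum {ι : Type*} (u : Finset ι) (f : ι → ℝ → ℂ)
    (hf : ∀ i ∈ u, Continuous (f i)) (k : ℤ) :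
    fourierCoeffT (fun θ => ∑ i ∈ u, f i θ) k = ∑ i ∈ u, fourierCoeffT (f i) k := by
  rw [fourierCoeffT]
  rw [intervalIntegral.integral_congr (g := fun θ =>
      ∑ i ∈ u, Complex.exp (-Complex.I * k * θ) * f i θ)
      (fun θ _ => by rw [Finset.mul_sum])]
  have hint : ∀ i ∈ u, IntervalIntegrable
      (fun θ : ℝ => Complex.exp (-Complex.I * (k : ℂ) * θ) * f i θ) volume 0 (2 * Real.pi) :=
    fun i hi => ((Complex.continuous_exp.comp ((continuous_const).mul
      Complex.continuous_ofReal)).mul (hf i hi)).intervalIntegrable _ _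
  rw [intervalIntegral.integral_finset_sum hint]
  rw [Finset.mul_sum]
  rfl

lemma fourierCoeffT_trigInterp (n : ℕ) (F : ℝ → ℂ) (k : ℤ) :
    fourierCoeffT (trigInterp n F) k =
      if k ∈ Finset.Icc (-(((n - 1) / 2 : ℕ) : ℤ)) ((n / 2 : ℕ) : ℤ) then dcoef n F k else 0 := by
  have : trigInterp n F = fun θ : ℝ =>
      ∑ j ∈ Finset.Icc (-(((n - 1) / 2 : ℕ) : ℤ)) ((n / 2 : ℕ) : ℤ),
        Complex.exp (Complex.I * j * (θ : ℂ)) * dcoef n F j := rfl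
  have hc : ∀ j ∈ Finset.Icc (-(((n - 1) / 2 : ℕ) : ℤ)) ((n / 2 : ℕ) : ℤ),
      Continuous (fun θ : ℝ => Complex.exp (Complex.I * (j : ℂ) * (θ : ℂ)) * dcoef n F j) :=
    fun j _ => ((Complex.continuous_exp.comp ((continuous_const).mul
      Complex.continuous_ofReal)).mul continuous_const)
  rw [this, fourierCoeffT_finsum _
    (fun (j : ℤ) (θ : ℝ) => Complex.exp (Complex.I * (j : ℂ) * (θ : ℂ)) * dcoef n F j) hc]
  rw [Finset.sum_congr rfl (fun j _ => fourierCoeffT_exp_mul j (dcoef n F j) k)]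
  simp only [Finset.sum_ite_eq', Finset.sum_ite_eq]

-- window notation
noncomputable def W (n : ℕ) : Finset ℤ := Finset.Icc (-(((n - 1) / 2 : ℕ) : ℤ)) ((n / 2 : ℕ) : ℤ)

lemma mem_W_abs {n : ℕ} {k : ℤ} (hk : k ∈ W n) : 2 * |k| ≤ (n : ℤ) := by
  rw [W, Finset.mem_Icc] at hk
  rcases hk with ⟨h1, h2⟩
  rcases abs_cases k with ⟨h, _⟩ | ⟨h, _⟩ <;> omega

lemma not_mem_W_abs {n : ℕ} (hn : 1 ≤ n) {k : ℤ} (hk : k ∉ W n) :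
    (n : ℤ) ≤ 2 * (1 + |k|) := by
  rw [W, Finset.mem_Icc] at hk
  push_neg at hk
  rcases abs_cases k with ⟨h, _⟩ | ⟨h, _⟩ <;> omega

lemma W_shift_abs {n : ℕ} (hn : 1 ≤ n) {k m : ℤ} (hk : k ∈ W n) (hm : m ≠ 0) :
    |m| * (n : ℤ) ≤ 2 * (1 + |k + m * n|) := by
  have h1 : 2 * |k| ≤ (n : ℤ) := mem_W_abs hk
  have h2 : 1 ≤ |m| := by rcases abs_cases m with ⟨h,_⟩|⟨h,_⟩ <;> omega
  have h3 : |m * n| ≤ |k + m * n| + |k| := by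
    calc |m * n| = |k + m * n - k| := by ring_nf
      _ ≤ |k + m * n| + |k| := abs_sub _ _
  have h4 : |m * n| = |m| * n := by
    rw [abs_mul, Nat.abs_cast]
  nlinarith [abs_nonneg (k + m * n), abs_nonneg k, abs_nonneg m, (by exact_mod_cast hn : (1:ℤ) ≤ n)]

lemma W_inj {n : ℕ} (hn : 1 ≤ n) :
    Function.Injective (fun p : (W n) × ℤ => (p.1 : ℤ) + p.2 * n) := by
  rintro ⟨⟨k, hk⟩, m⟩ ⟨⟨k', hk'⟩, m'⟩ h
  simp only at h
  rw [W, Finset.mem_Icc] at hk hk'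
  have hd : k - k' = (m' - m) * n := by linarith [h]
  by_cases hmm : m = m'
  · subst hmm
    simp only [Prod.mk.injEq, Subtype.mk.injEq]
    constructor
    · omega
    · trivial
  · exfalso
    have h1 : 1 ≤ |m' - m| := by rcases abs_cases (m' - m) with ⟨h,_⟩|⟨h,_⟩ <;> omega
    have : (n : ℤ) ≤ |k - k'| := by
      rw [hd, abs_mul, Nat.abs_cast]
      nlinarith [(by exact_mod_cast hn : (1:ℤ) ≤ n)]
    have hb : |k - k'| < n := by
      rcases abs_cases (k - k') with ⟨h, _⟩ | ⟨h, _⟩ <;> omega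
    exact absurd this (by omega)

lemma tsum_CS {f g : ℤ → ℝ} (hf : ∀ i, 0 ≤ f i) (hg : ∀ i, 0 ≤ g i)
    (hf2 : Summable (fun i => f i ^ 2)) (hg2 : Summable (fun i => g i ^ 2)) :
    (∑' i, f i * g i) ^ 2 ≤ (∑' i, f i ^ 2) * (∑' i, g i ^ 2) := by
  set A := ∑' i, f i ^ 2 with hA
  set B := ∑' i, g i ^ 2 with hB
  have hA0 : 0 ≤ A := tsum_nonneg fun i => sq_nonneg _
  have hB0 : 0 ≤ B := tsum_nonneg fun i => sq_nonneg _
  have hstep : ∑' i, f i * g i ≤ Real.sqrt (A * B) := by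
    refine tsum_le_of_sum_le' (Real.sqrt_nonneg _) fun u => ?_
    have h1 : (∑ i ∈ u, f i * g i) ^ 2 ≤ (∑ i ∈ u, f i ^ 2) * (∑ i ∈ u, g i ^ 2) :=
      Finset.sum_mul_sq_le_sq_mul_sq u f g
    have h2 : (∑ i ∈ u, f i ^ 2) * (∑ i ∈ u, g i ^ 2) ≤ A * B := by
      apply mul_le_mul (Summable.sum_le_tsum u (fun i _ => sq_nonneg _) hf2)
        (Summable.sum_le_tsum u (fun i _ => sq_nonneg _) hg2)
        (Finset.sum_nonneg fun i _ => sq_nonneg _)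
        hA0
    rw [show ∑ i ∈ u, f i * g i = |∑ i ∈ u, f i * g i| from
      (abs_of_nonneg (Finset.sum_nonneg fun i _ => mul_nonneg (hf i) (hg i))).symm]
    rw [← Real.sqrt_sq_eq_abs]
    exact Real.sqrt_le_sqrt (le_trans h1 h2)
  have h0 : 0 ≤ ∑' i, f i * g i := tsum_nonneg fun i => mul_nonneg (hf i) (hg i)
  calc (∑' i, f i * g i) ^ 2 ≤ Real.sqrt (A * B) ^ 2 := by
        exact pow_le_pow_left₀ h0 hstep 2
    _ = A * B := Real.sq_sqrt (mul_nonneg hA0 hB0)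

lemma coeff_err {F : ℝ → ℂ} (hF : Continuous F) (n : ℕ) (k : ℤ) :
    fourierCoeffT (fun θ => trigInterp n F θ - F θ) k
      = (if k ∈ W n then dcoef n F k else 0) - fourierCoeffT F k := by
  rw [fourierCoeffT_sub (continuous_trigInterp n F) hF, fourierCoeffT_trigInterp]
  rfl

lemma coeff_err_notW {F : ℝ → ℂ} (hF : Continuous F) {n : ℕ} {k : ℤ} (hk : k ∉ W n) :
    fourierCoeffT (fun θ => trigInterp n F θ - F θ) k = - fourierCoeffT F k := by
  rw [coeff_err hF, if_neg hk, zero_sub]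

lemma coeff_err_W {s : ℝ} (hs : 1 / 2 < s) {F : ℝ → ℂ} (hF : Continuous F)
    (hp : Function.Periodic F (2 * Real.pi))
    (hsum : Summable (fun k : ℤ => (1 + |(k : ℝ)|) ^ (2 * s) * ‖fourierCoeffT F k‖ ^ 2))
    {n : ℕ} (hn : 1 ≤ n) {k : ℤ} (hk : k ∈ W n) :
    HasSum (fun m : ℤ => if m = 0 then 0 else fourierCoeffT F (k + m * n))
      (fourierCoeffT (fun θ => trigInterp n F θ - F θ) k) := by
  rw [coeff_err hF, if_pos hk]
  have h1 := hasSum_alias hs hF hp hsum n hn k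
  have h2 : HasSum (fun m : ℤ => if m = 0 then fourierCoeffT F k else 0)
      (fourierCoeffT F k) := hasSum_ite_eq 0 _
  have := h1.sub h2
  refine this.congr_fun fun m => ?_
  by_cases hm : m = 0
  · subst hm; simp
  · simp [hm]

lemma perk_bound {s : ℝ} (hs : 1 / 2 < s) {F : ℝ → ℂ} (hF : Continuous F)
    (hp : Function.Periodic F (2 * Real.pi))
    (hsum : Summable (fun k : ℤ => (1 + |(k : ℝ)|) ^ (2 * s) * ‖fourierCoeffT F k‖ ^ 2))
    {n : ℕ} (hn : 1 ≤ n) {k : ℤ} (hk : k ∈ W n) :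
    ‖fourierCoeffT (fun θ => trigInterp n F θ - F θ) k‖ ^ 2
      ≤ (((n : ℝ)/2) ^ (-(2*s)) * ∑' m : ℤ, |(m : ℝ)| ^ (-(2*s)))
        * ∑' m : ℤ, (1 + |((k + m * n : ℤ) : ℝ)|) ^ (2*s) * ‖fourierCoeffT F (k + m * n)‖ ^ 2 := by
  have hn0 : (0:ℝ) < n := by exact_mod_cast hn
  have he : Function.Injective (fun m : ℤ => k + m * n) := by
    intro a b hab
    simp only [add_right_inj] at hab
    exact mul_right_cancel₀ (by exact_mod_cast (by omega : (n:ℤ) ≠ 0)) hab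
  set a : ℤ → ℝ := fun m => if m = 0 then 0 else (1 + |((k + m * n : ℤ) : ℝ)|) ^ (-s) with ha_def
  set b : ℤ → ℝ := fun m => (1 + |((k + m * n : ℤ) : ℝ)|) ^ s * ‖fourierCoeffT F (k + m * n)‖
    with hb_def
  have hpos : ∀ m : ℤ, (0:ℝ) < 1 + |((k + m * n : ℤ) : ℝ)| := fun m => by positivity
  have ha : ∀ m, 0 ≤ a m := fun m => by
    by_cases hm : m = 0
    · simp [ha_def, hm]
    · simp only [ha_def, hm, if_false]
      positivity
  have hb : ∀ m, 0 ≤ b m := fun m =>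
    mul_nonneg (Real.rpow_nonneg (hpos m).le _) (norm_nonneg _)
  have hab : ∀ m : ℤ, ‖if m = 0 then (0:ℂ) else fourierCoeffT F (k + m * n)‖ = a m * b m := by
    intro m
    by_cases hm : m = 0
    · simp [ha_def, hm]
    · simp only [ha_def, hb_def, hm, if_false, norm_zero]
      rw [← mul_assoc, ← Real.rpow_add (hpos m), neg_add_cancel, Real.rpow_zero, one_mul]
  have ha2 : Summable (fun m => a m ^ 2) := by
    refine Summable.of_nonneg_of_le (fun m => sq_nonneg _) (fun m => ?_)
      ((summable_weight hs).comp_injective he)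
    by_cases hm : m = 0
    · simp only [ha_def, hm, if_true]
      norm_num
      positivity
    · simp only [ha_def, hm, if_false, Function.comp_apply]
      rw [sq_rpow_half _ (hpos m).le]
      rw [show (2 : ℝ) * -s = -(2*s) by ring]
  have hb2eq : ∀ m, b m ^ 2
      = (1 + |((k + m * n : ℤ) : ℝ)|) ^ (2*s) * ‖fourierCoeffT F (k + m * n)‖ ^ 2 := by
    intro m
    rw [hb_def, mul_pow, sq_rpow_half _ (hpos m).le]
  have hb2 : Summable (fun m => b m ^ 2) := by
    refine Summable.of_nonneg_of_le (fun m => sq_nonneg _) (fun m => le_of_eq (hb2eq m))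
      (hsum.comp_injective he)
  -- the sum itself
  have hhs := coeff_err_W hs hF hp hsum hn hk
  have hsumm : Summable (fun m : ℤ => ‖if m = 0 then (0:ℂ) else fourierCoeffT F (k + m * n)‖) := by
    refine Summable.of_nonneg_of_le (fun m => norm_nonneg _) (fun m => ?_)
      (((ha2.add hb2).div_const 2))
    rw [hab m]
    nlinarith [sq_nonneg (a m - b m)]
  have hnorm : ‖fourierCoeffT (fun θ => trigInterp n F θ - F θ) k‖ ≤ ∑' m, a m * b m := by
    rw [← hhs.tsum_eq]
    refine le_trans (norm_tsum_le_tsum_norm hsumm) ?_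
    exact le_of_eq (tsum_congr hab)
  have hsq : ‖fourierCoeffT (fun θ => trigInterp n F θ - F θ) k‖ ^ 2
      ≤ (∑' m, a m ^ 2) * (∑' m, b m ^ 2) := by
    refine le_trans (pow_le_pow_left₀ (norm_nonneg _) hnorm 2) (tsum_CS ha hb ha2 hb2)
  refine le_trans hsq (mul_le_mul ?_ (le_of_eq (tsum_congr hb2eq)) (tsum_nonneg fun m => sq_nonneg _) ?_)
  · -- ∑ a² ≤ (n/2)^(-2s) * Z
    have hterm : ∀ m : ℤ, a m ^ 2 ≤ ((n:ℝ)/2) ^ (-(2*s)) * |(m:ℝ)| ^ (-(2*s)) := by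
      intro m
      by_cases hm : m = 0
      · subst hm
        simp only [ha_def, if_true, Int.cast_zero, abs_zero]
        rw [Real.zero_rpow (by intro h; nlinarith : -(2*s) ≠ 0), mul_zero]
        norm_num
      · simp only [ha_def, hm, if_false]
        rw [sq_rpow_half _ (hpos m).le, show (2:ℝ) * -s = -(2*s) by ring]
        have hZ := W_shift_abs hn hk hm
        have h1 : (0:ℝ) < |(m:ℝ)| * ((n:ℝ)/2) := by
          have : (0:ℝ) < |(m:ℝ)| := by
            simp only [abs_pos, Int.cast_ne_zero]; exact hm
          positivity
        have h2 : |(m:ℝ)| * ((n:ℝ)/2) ≤ 1 + |((k + m * n : ℤ) : ℝ)| := by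
          have hc : ((|m| * (n:ℤ) : ℤ) : ℝ) ≤ ((2 * (1 + |k + m * n|) : ℤ) : ℝ) :=
            Int.cast_le.mpr hZ
          push_cast at hc ⊢
          linarith
        calc (1 + |((k + m * n : ℤ) : ℝ)|) ^ (-(2*s))
            ≤ (|(m:ℝ)| * ((n:ℝ)/2)) ^ (-(2*s)) :=
              Real.rpow_le_rpow_of_nonpos h1 h2 (by linarith)
          _ = ((n:ℝ)/2) ^ (-(2*s)) * |(m:ℝ)| ^ (-(2*s)) := by
              rw [Real.mul_rpow (abs_nonneg _) (by positivity), mul_comm]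
    calc ∑' m, a m ^ 2 ≤ ∑' m : ℤ, ((n:ℝ)/2) ^ (-(2*s)) * |(m:ℝ)| ^ (-(2*s)) :=
          Summable.tsum_le_tsum hterm ha2 ((Real.summable_abs_int_rpow (by linarith)).mul_left _)
      _ = ((n:ℝ)/2) ^ (-(2*s)) * ∑' m : ℤ, |(m:ℝ)| ^ (-(2*s)) := tsum_mul_left
  · exact mul_nonneg (Real.rpow_nonneg (by positivity) _)
      (tsum_nonneg fun m => Real.rpow_nonneg (abs_nonneg _) _)

lemma windowsum {n : ℕ} (hn : 1 ≤ n) {A : ℤ → ℝ} (hA0 : ∀ j, 0 ≤ A j) (hA : Summable A) :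
    ∑ k ∈ W n, (∑' m : ℤ, A (k + m * n)) ≤ ∑' j : ℤ, A j := by
  have hn0 : (n:ℤ) ≠ 0 := by exact_mod_cast (by omega : n ≠ 0)
  have hinner : ∀ k : ℤ, Function.Injective (fun m : ℤ => k + m * n) := by
    intro k a b hab
    simp only [add_right_inj] at hab
    exact mul_right_cancel₀ hn0 hab
  have hE := W_inj hn
  have hS : Summable (fun p : (W n) × ℤ => A ((p.1 : ℤ) + p.2 * n)) :=
    hA.comp_injective hE
  calc ∑ k ∈ W n, (∑' m : ℤ, A (k + m * n))
      = ∑' (k : (W n : Finset ℤ)), ∑' m : ℤ, A ((k : ℤ) + m * n) :=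
        (Finset.tsum_subtype (W n) (fun k => ∑' m : ℤ, A (k + m * n))).symm
    _ = ∑' p : (W n) × ℤ, A ((p.1 : ℤ) + p.2 * n) :=
        (Summable.tsum_prod' hS (fun k => hA.comp_injective (hinner k))).symm
    _ ≤ ∑' j : ℤ, A j := by
        refine Summable.tsum_le_tsum_of_inj _ hE (fun c _ => hA0 c) (fun p => le_refl _) hS hA

/-- **Kress–Sloan.** For `s > 1/2` and `0 ≤ t ≤ s` there is a constant `C_{t,s}`
such that for every `n ≥ 1` and every continuous `2π`-periodic `F` with
`‖F‖_{H^s(𝕋)} < ∞`, the trigonometric interpolant satisfies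
`‖I_n F − F‖_{H^t(𝕋)} ≤ C_{t,s} n^{t−s} ‖F‖_{H^s(𝕋)}`. -/
theorem kress_sloan (s t : ℝ) (hs : 1 / 2 < s) (ht0 : 0 ≤ t) (hts : t ≤ s) :
    ∃ C : ℝ, 0 < C ∧ ∀ n : ℕ, 1 ≤ n → ∀ F : ℝ → ℂ,
      Continuous F → Function.Periodic F (2 * Real.pi) →
      Summable (fun k : ℤ => (1 + |(k : ℝ)|) ^ (2 * s) * ‖fourierCoeffT F k‖ ^ 2) →
      sobNormT t (fun θ => trigInterp n F θ - F θ)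
        ≤ C * (n : ℝ) ^ (t - s) * sobNormT s F := by
  set Z := ∑' m : ℤ, |(m : ℝ)| ^ (-(2*s)) with hZdef
  have hZ0 : 0 ≤ Z := tsum_nonneg fun m => Real.rpow_nonneg (abs_nonneg _) _
  set K := (2:ℝ) ^ (2*(s-t)) + (3/2:ℝ) ^ (2*t) * (2:ℝ) ^ (2*s) * Z with hKdef
  have hK0 : 0 < K := add_pos_of_pos_of_nonneg (Real.rpow_pos_of_pos two_pos _)
    (mul_nonneg (by positivity) hZ0)
  refine ⟨K ^ ((1:ℝ)/2), Real.rpow_pos_of_pos hK0 _, ?_⟩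
  intro n hn F hF hp hsum
  have hn0 : (0:ℝ) < n := by exact_mod_cast hn
  set Ss := ∑' k : ℤ, (1 + |(k : ℝ)|) ^ (2 * s) * ‖fourierCoeffT F k‖ ^ 2 with hSdef
  have hS0 : 0 ≤ Ss := tsum_nonneg fun k =>
    mul_nonneg (Real.rpow_nonneg (by positivity) _) (sq_nonneg _)
  -- main tsum bound
  have hmain : ∑' k : ℤ, (1 + |(k : ℝ)|) ^ (2 * t) *
      ‖fourierCoeffT (fun θ => trigInterp n F θ - F θ) k‖ ^ 2
      ≤ K * (n:ℝ) ^ (2*(t-s)) * Ss := by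
    have hBnn : 0 ≤ K * (n:ℝ) ^ (2*(t-s)) * Ss :=
      mul_nonneg (mul_nonneg hK0.le (Real.rpow_nonneg hn0.le _)) hS0
    refine tsum_le_of_sum_le' hBnn fun u => ?_
    rw [← Finset.sum_inter_add_sum_sdiff u (W n) _]
    -- window part
    have hwin : ∑ k ∈ u ∩ W n, (1 + |(k : ℝ)|) ^ (2 * t) *
        ‖fourierCoeffT (fun θ => trigInterp n F θ - F θ) k‖ ^ 2
        ≤ (3/2:ℝ) ^ (2*t) * (2:ℝ) ^ (2*s) * Z * (n:ℝ) ^ (2*(t-s)) * Ss := by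
      set c : ℝ := ((3/2:ℝ) * n) ^ (2*t) * (((n:ℝ)/2) ^ (-(2*s)) * Z) with hcdef
      have hc0 : 0 ≤ c := mul_nonneg (Real.rpow_nonneg (by positivity) _)
        (mul_nonneg (Real.rpow_nonneg (by positivity) _) hZ0)
      have hstep1 : ∀ k ∈ u ∩ W n, (1 + |(k : ℝ)|) ^ (2 * t) *
          ‖fourierCoeffT (fun θ => trigInterp n F θ - F θ) k‖ ^ 2
          ≤ c * ∑' m : ℤ, (1 + |((k + m * n : ℤ) : ℝ)|) ^ (2*s) *
              ‖fourierCoeffT F (k + m * n)‖ ^ 2 := by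
        intro k hk
        have hkW : k ∈ W n := (Finset.mem_inter.mp hk).2
        have hSk0 : 0 ≤ ∑' m : ℤ, (1 + |((k + m * n : ℤ) : ℝ)|) ^ (2*s) *
            ‖fourierCoeffT F (k + m * n)‖ ^ 2 :=
          tsum_nonneg fun m => mul_nonneg (Real.rpow_nonneg (by positivity) _) (sq_nonneg _)
        have h1 : (1 + |(k : ℝ)|) ^ (2 * t) ≤ ((3/2:ℝ) * n) ^ (2*t) := by
          apply Real.rpow_le_rpow (by positivity) ?_ (by linarith)
          have := mem_W_abs hkW
          have hcast : (2:ℝ) * |(k:ℝ)| ≤ (n:ℝ) := by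
            have h' := (Int.cast_le (R := ℝ)).mpr this
            push_cast at h'
            linarith
          linarith [show (1:ℝ) ≤ (n:ℝ) from by exact_mod_cast hn, abs_nonneg (k:ℝ)]
        calc (1 + |(k : ℝ)|) ^ (2 * t) *
            ‖fourierCoeffT (fun θ => trigInterp n F θ - F θ) k‖ ^ 2
            ≤ ((3/2:ℝ) * n) ^ (2*t) * ((((n:ℝ)/2) ^ (-(2*s)) * Z) *
                ∑' m : ℤ, (1 + |((k + m * n : ℤ) : ℝ)|) ^ (2*s) *
                  ‖fourierCoeffT F (k + m * n)‖ ^ 2) :=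
              mul_le_mul h1 (perk_bound hs hF hp hsum hn hkW) (sq_nonneg _)
                (Real.rpow_nonneg (by positivity) _)
          _ = c * ∑' m : ℤ, (1 + |((k + m * n : ℤ) : ℝ)|) ^ (2*s) *
                ‖fourierCoeffT F (k + m * n)‖ ^ 2 := by rw [hcdef]; ring
      have hstep2 : ∑ k ∈ u ∩ W n, (1 + |(k : ℝ)|) ^ (2 * t) *
          ‖fourierCoeffT (fun θ => trigInterp n F θ - F θ) k‖ ^ 2
          ≤ c * ∑ k ∈ W n, ∑' m : ℤ, (1 + |((k + m * n : ℤ) : ℝ)|) ^ (2*s) *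
              ‖fourierCoeffT F (k + m * n)‖ ^ 2 := by
        calc ∑ k ∈ u ∩ W n, (1 + |(k : ℝ)|) ^ (2 * t) *
            ‖fourierCoeffT (fun θ => trigInterp n F θ - F θ) k‖ ^ 2
            ≤ ∑ k ∈ u ∩ W n, c * ∑' m : ℤ, (1 + |((k + m * n : ℤ) : ℝ)|) ^ (2*s) *
                ‖fourierCoeffT F (k + m * n)‖ ^ 2 := Finset.sum_le_sum hstep1
          _ ≤ ∑ k ∈ W n, c * ∑' m : ℤ, (1 + |((k + m * n : ℤ) : ℝ)|) ^ (2*s) *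
                ‖fourierCoeffT F (k + m * n)‖ ^ 2 := by
              refine Finset.sum_le_sum_of_subset_of_nonneg
                (Finset.inter_subset_right) fun k _ _ => mul_nonneg hc0 (tsum_nonneg fun m =>
                  mul_nonneg (Real.rpow_nonneg (by positivity) _) (sq_nonneg _))
          _ = c * ∑ k ∈ W n, ∑' m : ℤ, (1 + |((k + m * n : ℤ) : ℝ)|) ^ (2*s) *
                ‖fourierCoeffT F (k + m * n)‖ ^ 2 := by rw [Finset.mul_sum]
      have hws : ∑ k ∈ W n, ∑' m : ℤ, (1 + |((k + m * n : ℤ) : ℝ)|) ^ (2*s) *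
          ‖fourierCoeffT F (k + m * n)‖ ^ 2 ≤ Ss :=
        windowsum hn (fun j => mul_nonneg (Real.rpow_nonneg (by positivity) _) (sq_nonneg _)) hsum
      have hceq : c = (3/2:ℝ) ^ (2*t) * (2:ℝ) ^ (2*s) * Z * (n:ℝ) ^ (2*(t-s)) := by
        have e1 : ((3/2:ℝ) * n) ^ (2*t) = (3/2:ℝ)^(2*t) * (n:ℝ)^(2*t) :=
          Real.mul_rpow (by norm_num) hn0.le
        have e2 : ((n:ℝ)/2) ^ (-(2*s)) = (n:ℝ)^(-(2*s)) * (2:ℝ)^(2*s) := by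
          rw [Real.div_rpow hn0.le (by norm_num : (0:ℝ) ≤ 2), div_eq_mul_inv,
            ← Real.rpow_neg (by norm_num : (0:ℝ) ≤ 2), neg_neg]
        have e3 : (n:ℝ)^(2*t) * (n:ℝ)^(-(2*s)) = (n:ℝ)^(2*(t-s)) := by
          rw [← Real.rpow_add hn0]; ring_nf
        rw [hcdef, e1, e2, ← e3]; ring
      calc ∑ k ∈ u ∩ W n, (1 + |(k : ℝ)|) ^ (2 * t) *
          ‖fourierCoeffT (fun θ => trigInterp n F θ - F θ) k‖ ^ 2
          ≤ c * Ss := le_trans hstep2 (mul_le_mul_of_nonneg_left hws hc0)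
        _ = (3/2:ℝ) ^ (2*t) * (2:ℝ) ^ (2*s) * Z * (n:ℝ) ^ (2*(t-s)) * Ss := by rw [hceq]
    -- off-window part
    have hoff : ∑ k ∈ u \ W n, (1 + |(k : ℝ)|) ^ (2 * t) *
        ‖fourierCoeffT (fun θ => trigInterp n F θ - F θ) k‖ ^ 2
        ≤ (2:ℝ) ^ (2*(s-t)) * (n:ℝ) ^ (2*(t-s)) * Ss := by
      have hstep1 : ∀ k ∈ u \ W n, (1 + |(k : ℝ)|) ^ (2 * t) *
          ‖fourierCoeffT (fun θ => trigInterp n F θ - F θ) k‖ ^ 2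
          ≤ ((n:ℝ)/2) ^ (2*(t-s)) * ((1 + |(k : ℝ)|) ^ (2*s) * ‖fourierCoeffT F k‖ ^ 2) := by
        intro k hk
        have hkW : k ∉ W n := (Finset.mem_sdiff.mp hk).2
        have hnrm : ‖fourierCoeffT (fun θ => trigInterp n F θ - F θ) k‖ = ‖fourierCoeffT F k‖ := by
          rw [coeff_err_notW hF hkW, norm_neg]
        have hlow : (n:ℝ)/2 ≤ 1 + |(k:ℝ)| := by
          have := not_mem_W_abs hn hkW
          have hcast := (Int.cast_le (R := ℝ)).mpr this
          push_cast at hcast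
          linarith [abs_nonneg (k:ℝ)]
        have h1 : (1 + |(k : ℝ)|) ^ (2*t) ≤ ((n:ℝ)/2) ^ (2*(t-s)) * (1 + |(k : ℝ)|) ^ (2*s) := by
          have hsplit : (1 + |(k : ℝ)|) ^ (2*t)
              = (1 + |(k : ℝ)|) ^ (2*(t-s)) * (1 + |(k : ℝ)|) ^ (2*s) := by
            rw [← Real.rpow_add (by positivity)]; ring_nf
          rw [hsplit]
          apply mul_le_mul_of_nonneg_right ?_ (Real.rpow_nonneg (by positivity) _)
          exact Real.rpow_le_rpow_of_nonpos (by positivity) hlow (by linarith)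
        rw [hnrm]
        calc (1 + |(k : ℝ)|) ^ (2 * t) * ‖fourierCoeffT F k‖ ^ 2
            ≤ (((n:ℝ)/2) ^ (2*(t-s)) * (1 + |(k : ℝ)|) ^ (2*s)) * ‖fourierCoeffT F k‖ ^ 2 :=
              mul_le_mul_of_nonneg_right h1 (sq_nonneg _)
          _ = ((n:ℝ)/2) ^ (2*(t-s)) * ((1 + |(k : ℝ)|) ^ (2*s) * ‖fourierCoeffT F k‖ ^ 2) := by
              ring
      have e2 : ((n:ℝ)/2) ^ (2*(t-s)) = (2:ℝ) ^ (2*(s-t)) * (n:ℝ) ^ (2*(t-s)) := by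
        rw [Real.div_rpow hn0.le (by norm_num : (0:ℝ) ≤ 2), div_eq_mul_inv,
          ← Real.rpow_neg (by norm_num : (0:ℝ) ≤ 2)]
        rw [show -(2*(t-s)) = 2*(s-t) by ring]
        ring
      calc ∑ k ∈ u \ W n, (1 + |(k : ℝ)|) ^ (2 * t) *
          ‖fourierCoeffT (fun θ => trigInterp n F θ - F θ) k‖ ^ 2
          ≤ ∑ k ∈ u \ W n, ((n:ℝ)/2) ^ (2*(t-s)) *
              ((1 + |(k : ℝ)|) ^ (2*s) * ‖fourierCoeffT F k‖ ^ 2) := Finset.sum_le_sum hstep1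
        _ = ((n:ℝ)/2) ^ (2*(t-s)) * ∑ k ∈ u \ W n,
              (1 + |(k : ℝ)|) ^ (2*s) * ‖fourierCoeffT F k‖ ^ 2 := by rw [Finset.mul_sum]
        _ ≤ ((n:ℝ)/2) ^ (2*(t-s)) * Ss := by
            apply mul_le_mul_of_nonneg_left ?_ (Real.rpow_nonneg (by positivity) _)
            exact Summable.sum_le_tsum _ (fun k _ => mul_nonneg (Real.rpow_nonneg (by positivity) _)
              (sq_nonneg _)) hsum
        _ = (2:ℝ) ^ (2*(s-t)) * (n:ℝ) ^ (2*(t-s)) * Ss := by rw [e2]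
    calc ∑ k ∈ u ∩ W n, (1 + |(k : ℝ)|) ^ (2 * t) *
          ‖fourierCoeffT (fun θ => trigInterp n F θ - F θ) k‖ ^ 2
        + ∑ k ∈ u \ W n, (1 + |(k : ℝ)|) ^ (2 * t) *
          ‖fourierCoeffT (fun θ => trigInterp n F θ - F θ) k‖ ^ 2
        ≤ (3/2:ℝ) ^ (2*t) * (2:ℝ) ^ (2*s) * Z * (n:ℝ) ^ (2*(t-s)) * Ss
          + (2:ℝ) ^ (2*(s-t)) * (n:ℝ) ^ (2*(t-s)) * Ss := add_le_add hwin hoff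
      _ = K * (n:ℝ) ^ (2*(t-s)) * Ss := by rw [hKdef]; ring
  -- conclude
  rw [sobNormT, sobNormT]
  have hTg0 : 0 ≤ ∑' k : ℤ, (1 + |(k : ℝ)|) ^ (2 * t) *
      ‖fourierCoeffT (fun θ => trigInterp n F θ - F θ) k‖ ^ 2 :=
    tsum_nonneg fun k => mul_nonneg (Real.rpow_nonneg (by positivity) _) (sq_nonneg _)
  refine le_trans (Real.rpow_le_rpow hTg0 hmain (by norm_num)) (le_of_eq ?_)
  rw [Real.mul_rpow (mul_nonneg hK0.le (Real.rpow_nonneg hn0.le _)) hS0,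
    Real.mul_rpow hK0.le (Real.rpow_nonneg hn0.le _)]
  have hnn : ((n:ℝ) ^ (2*(t-s))) ^ ((1:ℝ)/2) = (n:ℝ) ^ (t-s) := by
    rw [← Real.rpow_mul hn0.le]
    rw [show (2*(t-s)) * ((1:ℝ)/2) = t - s by ring]
  rw [hnn]
end

section
/- Let s > 1/2 and 0 ≤ t ≤ s. There is a constant c_s depending only on s such that for every integer n ≥ 1 and every sequence (F̂_k)_{k∈ℤ} of complex numbers with Σ_{k∈ℤ}(1+|k|)^{2s}|F̂_k|² < ∞, the aliasing sums satisfy Σ_{k=−n₋}^{n₊} (1+|k|)^{2t} | Σ_{m∈ℤ, m≠0} F̂_{k+mn} |² ≤ c_s² n^{−2s} (1+n₊)^{2t} Σ_{k∈ℤ}(1+|k|)^{2s}|F̂_k|². -/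
lemma summable_mul_of_sq {u v : ℤ → ℝ} (hu : ∀ m, 0 ≤ u m) (hv : ∀ m, 0 ≤ v m)
    (h2u : Summable (fun m => u m ^ 2)) (h2v : Summable (fun m => v m ^ 2)) :
    Summable (fun m => u m * v m) := by
  refine Summable.of_nonneg_of_le (fun m => mul_nonneg (hu m) (hv m)) (fun m => ?_)
    ((h2u.add h2v).mul_left (1/2 : ℝ))
  nlinarith [sq_nonneg (u m - v m)]

lemma tsum_cauchy_schwarz {u v : ℤ → ℝ} (hu : ∀ m, 0 ≤ u m) (hv : ∀ m, 0 ≤ v m)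
    (h2u : Summable (fun m => u m ^ 2)) (h2v : Summable (fun m => v m ^ 2)) :
    (∑' m, u m * v m) ^ 2 ≤ (∑' m, u m ^ 2) * ∑' m, v m ^ 2 := by
  have huv := summable_mul_of_sq hu hv h2u h2v
  have hU : 0 ≤ ∑' m, u m ^ 2 := tsum_nonneg fun m => sq_nonneg _
  have hV : 0 ≤ ∑' m, v m ^ 2 := tsum_nonneg fun m => sq_nonneg _
  have key : ∑' m, u m * v m ≤ Real.sqrt ((∑' m, u m ^ 2) * ∑' m, v m ^ 2) := by
    refine Summable.tsum_le_of_sum_le huv fun F => Real.le_sqrt_of_sq_le ?_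
    calc (∑ m ∈ F, u m * v m) ^ 2 ≤ (∑ m ∈ F, u m ^ 2) * ∑ m ∈ F, v m ^ 2 :=
          Finset.sum_mul_sq_le_sq_mul_sq F u v
      _ ≤ (∑' m, u m ^ 2) * ∑' m, v m ^ 2 :=
          mul_le_mul (Summable.sum_le_tsum F (fun m _ => sq_nonneg _) h2u)
            (Summable.sum_le_tsum F (fun m _ => sq_nonneg _) h2v)
            (Finset.sum_nonneg fun m _ => sq_nonneg _) hU
  have h0 : 0 ≤ ∑' m, u m * v m := tsum_nonneg fun m => mul_nonneg (hu m) (hv m)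
  calc (∑' m, u m * v m) ^ 2 ≤ Real.sqrt ((∑' m, u m ^ 2) * ∑' m, v m ^ 2) ^ 2 := by
        gcongr
    _ = _ := Real.sq_sqrt (mul_nonneg hU hV)


/-- **Aliasing estimate.** For `s > 1/2` there is a constant `c_s` depending only
on `s` such that for every `0 ≤ t ≤ s`, every `n ≥ 1` (with `n₊ = ⌊n/2⌋`,
`n₋ = ⌊(n-1)/2⌋`) and every sequence `(F̂_k)_{k∈ℤ}` with
`∑_k (1+|k|)^{2s} |F̂_k|² < ∞`,
`∑_{k=-n₋}^{n₊} (1+|k|)^{2t} |∑_{m≠0} F̂_{k+mn}|²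
  ≤ c_s² n^{-2s} (1+n₊)^{2t} ∑_k (1+|k|)^{2s} |F̂_k|²`. -/
theorem aliasing_estimate (s : ℝ) (hs : 1 / 2 < s) :
    ∃ c : ℝ, 0 < c ∧ ∀ t : ℝ, 0 ≤ t → t ≤ s → ∀ n : ℕ, 1 ≤ n → ∀ Fh : ℤ → ℂ,
      Summable (fun k : ℤ => (1 + |(k : ℝ)|) ^ (2 * s) * ‖Fh k‖ ^ 2) →
      ∑ k ∈ Finset.Icc (-(((n - 1) / 2 : ℕ) : ℤ)) ((n / 2 : ℕ) : ℤ),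
          (1 + |(k : ℝ)|) ^ (2 * t) *
            ‖∑' m : ℤ, if m = 0 then 0 else Fh (k + m * n)‖ ^ 2
        ≤ c ^ 2 * (n : ℝ) ^ (-(2 * s)) * (1 + ((n / 2 : ℕ) : ℝ)) ^ (2 * t) *
          ∑' k : ℤ, (1 + |(k : ℝ)|) ^ (2 * s) * ‖Fh k‖ ^ 2 := by
  have hσ : (1:ℝ) < 2 * s := by linarith
  have hA : Summable (fun m : ℤ => |(m:ℝ)| ^ (-(2*s))) := Real.summable_abs_int_rpow hσ
  have hAnn : ∀ m : ℤ, 0 ≤ |(m:ℝ)| ^ (-(2*s)) := fun m => Real.rpow_nonneg (abs_nonneg _) _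
  set A := ∑' m : ℤ, |(m:ℝ)| ^ (-(2*s)) with hAdef
  have hApos : (0:ℝ) < A := Summable.tsum_pos hA hAnn 1 (by norm_num)
  refine ⟨(2:ℝ)^s * Real.sqrt A, by positivity, ?_⟩
  intro t ht hts n hn Fh hF
  have hc2 : ((2:ℝ)^s * Real.sqrt A)^2 = (2:ℝ)^(2*s) * A := by
    rw [mul_pow, Real.sq_sqrt hApos.le]
    congr 1
    rw [← Real.rpow_natCast ((2:ℝ)^s) 2, ← Real.rpow_mul (by norm_num : (0:ℝ) ≤ 2)]
    norm_num [mul_comm s 2]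
  set np : ℕ := n / 2 with hnp
  set nm : ℕ := (n - 1) / 2 with hnm
  set h : ℤ → ℝ := fun j => (1 + |(j:ℝ)|) ^ (2*s) * ‖Fh j‖ ^ 2 with hh
  have hhnn : ∀ j, 0 ≤ h j := fun j =>
    mul_nonneg (Real.rpow_nonneg (by positivity) _) (sq_nonneg _)
  set K : Finset ℤ := Finset.Icc (-(nm:ℤ)) (np:ℤ) with hK
  have hinj : ∀ k : ℤ, Function.Injective (fun m : ℤ => k + m * (n:ℤ)) := by
    intro k m₁ m₂ hmeq
    have hn0 : (n:ℤ) ≠ 0 := by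
      have : 0 < n := hn
      exact_mod_cast this.ne'
    simp only at hmeq
    exact mul_right_cancel₀ hn0 (by linarith)
  have huniq : ∀ k₁ ∈ K, ∀ k₂ ∈ K, ∀ m₁ m₂ : ℤ,
      k₁ + m₁ * (n:ℤ) = k₂ + m₂ * (n:ℤ) → k₁ = k₂ := by
    intro k₁ hk₁ k₂ hk₂ m₁ m₂ heq
    rw [hK, Finset.mem_Icc] at hk₁ hk₂
    have hdvd : (n:ℤ) ∣ (k₁ - k₂) := ⟨m₂ - m₁, by linear_combination heq⟩
    have habs : |k₁ - k₂| < (n:ℤ) := by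
      rw [abs_lt]; constructor <;> omega
    have := Int.eq_zero_of_abs_lt_dvd hdvd habs
    omega
  set S : ℤ → Set ℤ := fun k => (fun m : ℤ => k + m * (n:ℤ)) '' {m | m ≠ 0} with hS
  set T : ℤ → ℝ := fun k => ∑' j : ℤ, (S k).indicator h j with hT
  have hTnn : ∀ k, 0 ≤ T k :=
    fun k => tsum_nonneg (fun j => Set.indicator_apply_nonneg (fun _ => hhnn j))
  have key : ∀ k ∈ K,
      (1 + |(k:ℝ)|)^(2*t) * ‖∑' m : ℤ, if m = 0 then (0:ℂ) else Fh (k + m * n)‖^2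
      ≤ (1 + (np:ℝ))^(2*t) * ((2:ℝ)^(2*s) * (n:ℝ)^(-(2*s)) * A) * T k := by
    intro k hk
    rw [hK, Finset.mem_Icc] at hk
    have hkabs : |k| ≤ (np:ℤ) := abs_le.mpr ⟨by omega, hk.2⟩
    have hk1 : |(k:ℝ)| ≤ (np:ℝ) := by exact_mod_cast hkabs
    have hkhalf : 2 * |(k:ℝ)| ≤ (n:ℝ) := by
      have h2 : 2 * |k| ≤ (n:ℤ) := by omega
      exact_mod_cast h2
    have hxpos : ∀ m : ℤ, (0:ℝ) < 1 + |((k + m * (n:ℤ)):ℝ)| := fun m => by positivity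
    set u : ℤ → ℝ := fun m => if m = 0 then 0 else (1 + |((k + m * (n:ℤ)):ℝ)|) ^ (-s) with hu
    set v : ℤ → ℝ := fun m => if m = 0 then 0
      else (1 + |((k + m * (n:ℤ)):ℝ)|) ^ s * ‖Fh (k + m * (n:ℤ))‖ with hv
    have hun : ∀ m, 0 ≤ u m := by
      intro m; rw [hu]; dsimp only; split
      · exact le_refl 0
      · exact Real.rpow_nonneg (hxpos m).le _
    have hvn : ∀ m, 0 ≤ v m := by
      intro m; rw [hv]; dsimp only; split
      · exact le_refl 0
      · exact mul_nonneg (Real.rpow_nonneg (hxpos m).le _) (norm_nonneg _)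
    have hu2 : ∀ m, u m ^ 2 =
        if m = 0 then 0 else (1 + |((k + m * (n:ℤ)):ℝ)|) ^ (-(2*s)) := by
      intro m; rw [hu]; dsimp only; split
      · norm_num
      · rw [← Real.rpow_natCast _ 2, ← Real.rpow_mul (hxpos m).le]
        norm_num; ring_nf
    have hv2 : ∀ m, v m ^ 2 = if m = 0 then 0 else h (k + m * (n:ℤ)) := by
      intro m; rw [hv]; dsimp only; split
      · norm_num
      · rw [mul_pow, ← Real.rpow_natCast _ 2, ← Real.rpow_mul (hxpos m).le, hh]
        norm_num [mul_comm s 2]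
    have huvm : ∀ m : ℤ, ‖if m = 0 then (0:ℂ) else Fh (k + m * (n:ℤ))‖ = u m * v m := by
      intro m; rw [hu, hv]; dsimp only; split
      · simp
      · rw [← mul_assoc, ← Real.rpow_add (hxpos m), neg_add_cancel, Real.rpow_zero, one_mul]
    have hbound : ∀ m : ℤ, u m ^ 2 ≤ (2:ℝ)^(2*s) * ((n:ℝ)^(-(2*s)) * |(m:ℝ)|^(-(2*s))) := by
      intro m; rw [hu2]
      by_cases hm : m = 0
      · rw [if_pos hm, hm]
        positivity
      · rw [if_neg hm]
        have hm1 : (1:ℝ) ≤ |(m:ℝ)| := by exact_mod_cast Int.one_le_abs hm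
        have hn1 : (1:ℝ) ≤ (n:ℝ) := by exact_mod_cast hn
        have htri : |(m:ℝ)| * (n:ℝ) - |(k:ℝ)| ≤ |((k + m * (n:ℤ)):ℝ)| := by
          push_cast
          have h1 : |(m:ℝ) * (n:ℝ)| ≤ |(k:ℝ) + (m:ℝ) * (n:ℝ)| + |(k:ℝ)| := by
            have := abs_add_le ((k:ℝ) + (m:ℝ) * (n:ℝ)) (-(k:ℝ))
            simpa using this
          have h2 : |(m:ℝ) * (n:ℝ)| = |(m:ℝ)| * (n:ℝ) := by
            rw [abs_mul, abs_of_nonneg (by positivity : (0:ℝ) ≤ (n:ℝ))]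
          linarith
        have hmul : (n:ℝ) * 1 ≤ (n:ℝ) * |(m:ℝ)| :=
          mul_le_mul_of_nonneg_left hm1 (by positivity)
        have hlow : (n:ℝ) * |(m:ℝ)| / 2 ≤ 1 + |((k + m * (n:ℤ)):ℝ)| := by
          nlinarith [htri, hkhalf, hmul]
        have hmpos : (0:ℝ) < |(m:ℝ)| := lt_of_lt_of_le one_pos hm1
        have hpos : (0:ℝ) < (n:ℝ) * |(m:ℝ)| / 2 := by
          have : (0:ℝ) < (n:ℝ) := by linarith
          positivity
        calc (1 + |((k + m * (n:ℤ)):ℝ)|) ^ (-(2*s))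
            ≤ ((n:ℝ) * |(m:ℝ)| / 2) ^ (-(2*s)) :=
              Real.rpow_le_rpow_of_nonpos hpos hlow (by linarith)
          _ = (2:ℝ)^(2*s) * ((n:ℝ)^(-(2*s)) * |(m:ℝ)|^(-(2*s))) := by
              rw [div_eq_mul_inv, Real.mul_rpow (by positivity) (by norm_num),
                Real.mul_rpow (by positivity) (by positivity),
                Real.inv_rpow (by norm_num : (0:ℝ) ≤ 2), Real.rpow_neg (by norm_num : (0:ℝ) ≤ 2),
                inv_inv]
              ring
    have hsu2 : Summable (fun m => u m ^ 2) :=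
      Summable.of_nonneg_of_le (fun m => sq_nonneg _) hbound
        ((hA.mul_left ((n:ℝ)^(-(2*s)))).mul_left ((2:ℝ)^(2*s)))
    have hsv2 : Summable (fun m => v m ^ 2) := by
      refine Summable.of_nonneg_of_le (fun m => sq_nonneg _) (fun m => ?_)
        ((hF.comp_injective (hinj k)).congr (fun m => rfl))
      rw [hv2]
      split
      · exact hhnn _
      · exact le_refl _
    have hu2sum : ∑' m, u m ^ 2 ≤ (2:ℝ)^(2*s) * ((n:ℝ)^(-(2*s)) * A) := by
      calc ∑' m, u m ^ 2
          ≤ ∑' m : ℤ, (2:ℝ)^(2*s) * ((n:ℝ)^(-(2*s)) * |(m:ℝ)|^(-(2*s))) :=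
            Summable.tsum_le_tsum hbound hsu2 ((hA.mul_left ((n:ℝ)^(-(2*s)))).mul_left ((2:ℝ)^(2*s)))
        _ = (2:ℝ)^(2*s) * ((n:ℝ)^(-(2*s)) * A) := by
            rw [tsum_mul_left, tsum_mul_left]
    have hvT : ∑' m, v m ^ 2 = T k := by
      have hind : ∀ m : ℤ, v m ^ 2 = (S k).indicator h ((fun m : ℤ => k + m * (n:ℤ)) m) := by
        intro m; rw [hv2]
        by_cases hm : m = 0
        · rw [if_pos hm, hm]
          symm
          apply Set.indicator_of_notMem
          intro hmem
          simp only [hS, Set.mem_image, Set.mem_setOf_eq] at hmem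
          obtain ⟨m', hm', hem'⟩ := hmem
          exact hm' (hinj k hem')
        · rw [if_neg hm]
          have hmem : (fun m : ℤ => k + m * (n:ℤ)) m ∈ S k := by
            simp only [hS, Set.mem_image, Set.mem_setOf_eq]
            exact ⟨m, hm, rfl⟩
          exact (Set.indicator_of_mem hmem h).symm
      calc ∑' m, v m ^ 2 = ∑' m : ℤ, (S k).indicator h ((fun m : ℤ => k + m * (n:ℤ)) m) :=
            tsum_congr hind
        _ = ∑' j : ℤ, (S k).indicator h j := by
            refine Function.Injective.tsum_eq (hinj k) (fun j hj => ?_)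
            by_cases hjS : j ∈ S k
            · simp only [hS, Set.mem_image, Set.mem_setOf_eq] at hjS
              obtain ⟨m', _, hem'⟩ := hjS
              exact ⟨m', hem'⟩
            · exact absurd (Set.indicator_of_notMem hjS h) hj
        _ = T k := by rw [hT]
    -- norm bound
    have hsnorm : Summable (fun m : ℤ => ‖if m = 0 then (0:ℂ) else Fh (k + m * (n:ℤ))‖) :=
      (summable_mul_of_sq hun hvn hsu2 hsv2).congr (fun m => (huvm m).symm)
    have hnorm : ‖∑' m : ℤ, if m = 0 then (0:ℂ) else Fh (k + m * (n:ℤ))‖ ≤ ∑' m, u m * v m := by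
      calc ‖∑' m : ℤ, if m = 0 then (0:ℂ) else Fh (k + m * (n:ℤ))‖
          ≤ ∑' m : ℤ, ‖if m = 0 then (0:ℂ) else Fh (k + m * (n:ℤ))‖ :=
            norm_tsum_le_tsum_norm hsnorm
        _ = ∑' m, u m * v m := tsum_congr huvm
    have hsq : ‖∑' m : ℤ, if m = 0 then (0:ℂ) else Fh (k + m * (n:ℤ))‖ ^ 2
        ≤ (2:ℝ)^(2*s) * ((n:ℝ)^(-(2*s)) * A) * T k := by
      calc ‖∑' m : ℤ, if m = 0 then (0:ℂ) else Fh (k + m * (n:ℤ))‖ ^ 2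
          ≤ (∑' m, u m * v m) ^ 2 := by
            gcongr
        _ ≤ (∑' m, u m ^ 2) * ∑' m, v m ^ 2 := tsum_cauchy_schwarz hun hvn hsu2 hsv2
        _ ≤ ((2:ℝ)^(2*s) * ((n:ℝ)^(-(2*s)) * A)) * ∑' m, v m ^ 2 :=
            mul_le_mul_of_nonneg_right hu2sum (tsum_nonneg fun m => sq_nonneg _)
        _ = (2:ℝ)^(2*s) * ((n:ℝ)^(-(2*s)) * A) * T k := by rw [hvT]
    have hweight : (1 + |(k:ℝ)|)^(2*t) ≤ (1 + (np:ℝ))^(2*t) :=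
      Real.rpow_le_rpow (by positivity) (by linarith) (by linarith)
    calc (1 + |(k:ℝ)|)^(2*t) * ‖∑' m : ℤ, if m = 0 then (0:ℂ) else Fh (k + m * n)‖^2
        ≤ (1 + (np:ℝ))^(2*t) * ((2:ℝ)^(2*s) * ((n:ℝ)^(-(2*s)) * A) * T k) := by
          apply mul_le_mul hweight hsq (sq_nonneg _) (by positivity)
      _ = (1 + (np:ℝ))^(2*t) * ((2:ℝ)^(2*s) * (n:ℝ)^(-(2*s)) * A) * T k := by ring
  -- sum the per-k bounds
  have hsumT : ∑ k ∈ K, T k ≤ ∑' j : ℤ, h j := by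
    have hswap : ∑ k ∈ K, T k = ∑' j : ℤ, ∑ k ∈ K, (S k).indicator h j :=
      (Summable.tsum_finsetSum (fun k _ => hF.indicator _)).symm
    rw [hswap]
    refine Summable.tsum_le_tsum (fun j => ?_) ?_ hF
    · by_cases hex : ∃ k₀ ∈ K, j ∈ S k₀
      · obtain ⟨k₀, hk₀, hjk₀⟩ := hex
        have hone : ∑ k ∈ K, (S k).indicator h j = (S k₀).indicator h j := by
          refine Finset.sum_eq_single_of_mem k₀ hk₀ (fun b hb hne => ?_)
          refine Set.indicator_of_notMem (fun hjb => hne ?_) h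
          simp only [hS, Set.mem_image, Set.mem_setOf_eq] at hjb hjk₀
          obtain ⟨m₁, _, he₁⟩ := hjb
          obtain ⟨m₂, _, he₂⟩ := hjk₀
          exact huniq b hb k₀ hk₀ m₁ m₂ (he₁.trans he₂.symm)
        rw [hone, Set.indicator_of_mem hjk₀]
      · rw [Finset.sum_eq_zero (fun b hb =>
          Set.indicator_of_notMem (fun hjb => hex ⟨b, hb, hjb⟩) h)]
        exact hhnn j
    · exact summable_sum (fun k _ => hF.indicator _)
  calc ∑ k ∈ K, (1 + |(k:ℝ)|)^(2*t) * ‖∑' m : ℤ, if m = 0 then (0:ℂ) else Fh (k + m * n)‖^2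
      ≤ ∑ k ∈ K, (1 + (np:ℝ))^(2*t) * ((2:ℝ)^(2*s) * (n:ℝ)^(-(2*s)) * A) * T k :=
        Finset.sum_le_sum key
    _ = (1 + (np:ℝ))^(2*t) * ((2:ℝ)^(2*s) * (n:ℝ)^(-(2*s)) * A) * ∑ k ∈ K, T k := by
        rw [← Finset.mul_sum]
    _ ≤ (1 + (np:ℝ))^(2*t) * ((2:ℝ)^(2*s) * (n:ℝ)^(-(2*s)) * A) * ∑' j : ℤ, h j := by
        apply mul_le_mul_of_nonneg_left hsumT
        positivity
    _ = ((2:ℝ)^s * Real.sqrt A)^2 * (n:ℝ)^(-(2*s)) * (1 + (np:ℝ))^(2*t) * ∑' j : ℤ, h j := by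
        rw [hc2]; ring
end
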